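/- The four-qubit GHZ state e₁⊗e₁⊗e₁⊗e₁ + e₂⊗e₂⊗e₂⊗e₂ and the four-qubit cluster state e₁⊗e₁⊗e₁⊗e₁ + e₁⊗e₁⊗e₂⊗e₂ + e₂⊗e₂⊗e₁⊗e₁ − e₂⊗e₂⊗e₂⊗e₂ are not SLOCC-equivalent: there exist no invertible linear maps F¹, F², F³, F⁴ on ℂ² with (F¹ ⊗ F² ⊗ F³ ⊗ F⁴)(e₁⊗e₁⊗e₁⊗e₁ + e₂⊗e₂⊗e₂⊗e₂) = e₁⊗e₁⊗e₁⊗e₁ + e₁⊗e₁⊗e₂⊗e₂ + e₂⊗e₂⊗e₁⊗e₁ − e₂⊗e₂⊗e₂⊗e₂. -/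
import Mathlib


open scoped TensorProduct

/-- The standard basis vectors of `ℂ²` (`e 0 = e₁`, `e 1 = e₂`). -/
noncomputable def e (i : Fin 2) : Fin 2 → ℂ := Pi.single i 1

/-- The space of the last three qubits. -/
abbrev Qubit3 := (Fin 2 → ℂ) ⊗[ℂ] ((Fin 2 → ℂ) ⊗[ℂ] (Fin 2 → ℂ))

/-- The space of four qubits, `ℂ² ⊗ ℂ² ⊗ ℂ² ⊗ ℂ²`. -/
abbrev Qubit4 := (Fin 2 → ℂ) ⊗[ℂ] Qubit3

-- Help instance synthesis on the deeply nested tensor product (this is the canonical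
-- Mathlib instance, just with explicit arguments).
noncomputable instance : AddCommGroup Qubit4 :=
  @TensorProduct.addCommGroup ℂ _ (Fin 2 → ℂ) Qubit3 _ _ _ _

/-- The action of four linear maps on the four-qubit space. -/
noncomputable def map4 (F1 F2 F3 F4 : (Fin 2 → ℂ) →ₗ[ℂ] (Fin 2 → ℂ)) :
    Qubit4 →ₗ[ℂ] Qubit4 :=
  TensorProduct.map F1 (TensorProduct.map F2 (TensorProduct.map F3 F4))

/-- The four-qubit GHZ state `e₁⊗e₁⊗e₁⊗e₁ + e₂⊗e₂⊗e₂⊗e₂`. -/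
noncomputable def GHZ4 : Qubit4 :=
  e 0 ⊗ₜ[ℂ] (e 0 ⊗ₜ[ℂ] (e 0 ⊗ₜ[ℂ] e 0)) + e 1 ⊗ₜ[ℂ] (e 1 ⊗ₜ[ℂ] (e 1 ⊗ₜ[ℂ] e 1))

/-- The four-qubit cluster state
`e₁⊗e₁⊗e₁⊗e₁ + e₁⊗e₁⊗e₂⊗e₂ + e₂⊗e₂⊗e₁⊗e₁ − e₂⊗e₂⊗e₂⊗e₂`. -/
noncomputable def cluster4 : Qubit4 :=
  e 0 ⊗ₜ[ℂ] (e 0 ⊗ₜ[ℂ] (e 0 ⊗ₜ[ℂ] e 0)) + e 0 ⊗ₜ[ℂ] (e 0 ⊗ₜ[ℂ] (e 1 ⊗ₜ[ℂ] e 1))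
    + e 1 ⊗ₜ[ℂ] (e 1 ⊗ₜ[ℂ] (e 0 ⊗ₜ[ℂ] e 0)) - e 1 ⊗ₜ[ℂ] (e 1 ⊗ₜ[ℂ] (e 1 ⊗ₜ[ℂ] e 1))


/-- A 3×3 matrix that is a sum of two rank-one matrices cannot be the identity. -/
lemma rank_two_ne_id (x0 x1 x2 y0 y1 y2 z0 z1 z2 w0 w1 w2 : ℂ)
    (h00 : x0 * y0 + z0 * w0 = 1) (h01 : x0 * y1 + z0 * w1 = 0)
    (h02 : x0 * y2 + z0 * w2 = 0) (h11 : x1 * y1 + z1 * w1 = 1)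
    (h12 : x1 * y2 + z1 * w2 = 0) (h22 : x2 * y2 + z2 * w2 = 1) : False := by
  have h : (1 : ℂ) = 0 := by
    linear_combination (-((x1*y1+z1*w1)*(x2*y2+z2*w2) - (x1*y2+z1*w2)*(x2*y1+z2*w1))) * h00
      + ((x1*y0+z1*w0)*(x2*y2+z2*w2) - (x1*y2+z1*w2)*(x2*y0+z2*w0)) * h01
      - ((x1*y0+z1*w0)*(x2*y1+z2*w1) - (x1*y1+z1*w1)*(x2*y0+z2*w0)) * h02
      - (x2*y2+z2*w2) * h11 + (x2*y1+z2*w1) * h12 - h22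
  exact one_ne_zero h

/-- The coordinate functional on the four-qubit space. -/
noncomputable def phi (i j k l : Fin 2) : Qubit4 →ₗ[ℂ] ℂ :=
  TensorProduct.lift ((LinearMap.proj i : (Fin 2 → ℂ) →ₗ[ℂ] ℂ).smulRight
    (TensorProduct.lift ((LinearMap.proj j : (Fin 2 → ℂ) →ₗ[ℂ] ℂ).smulRight
      (TensorProduct.lift ((LinearMap.proj k : (Fin 2 → ℂ) →ₗ[ℂ] ℂ).smulRight
        (LinearMap.proj l : (Fin 2 → ℂ) →ₗ[ℂ] ℂ))))))

lemma phi_tmul (i j k l : Fin 2) (a b c d : Fin 2 → ℂ) :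
    phi i j k l (a ⊗ₜ[ℂ] (b ⊗ₜ[ℂ] (c ⊗ₜ[ℂ] d))) = a i * (b j * (c k * d l)) := by
  simp [phi]

theorem GHZ4_not_slocc_equivalent_to_cluster4 :
    ¬ ∃ F1 F2 F3 F4 : (Fin 2 → ℂ) ≃ₗ[ℂ] (Fin 2 → ℂ),
        map4 F1.toLinearMap F2.toLinearMap F3.toLinearMap F4.toLinearMap GHZ4
          = cluster4 := by
  rintro ⟨F1, F2, F3, F4, h⟩
  have H : ∀ i j k l : Fin 2,
      (F1 (e 0)) i * ((F2 (e 0)) j * ((F3 (e 0)) k * (F4 (e 0)) l))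
        + (F1 (e 1)) i * ((F2 (e 1)) j * ((F3 (e 1)) k * (F4 (e 1)) l))
        = phi i j k l cluster4 := by
    intro i j k l
    have := congrArg (phi i j k l) h
    simpa [map4, GHZ4, map_add, TensorProduct.map_tmul, phi_tmul] using this
  have C : ∀ i j k l : Fin 2, phi i j k l cluster4
      = (if i = 0 ∧ j = 0 ∧ k = 0 ∧ l = 0 then 1 else 0)
        + (if i = 0 ∧ j = 0 ∧ k = 1 ∧ l = 1 then 1 else 0)
        + (if i = 1 ∧ j = 1 ∧ k = 0 ∧ l = 0 then 1 else 0)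
        - (if i = 1 ∧ j = 1 ∧ k = 1 ∧ l = 1 then 1 else 0) := by
    intro i j k l
    simp only [cluster4, map_add, map_sub, phi_tmul, e, Pi.single_apply]
    fin_cases i <;> fin_cases j <;> fin_cases k <;> fin_cases l <;> norm_num
  have h00 := (H 0 0 0 0).trans (C 0 0 0 0)
  have h01 := (H 0 0 0 1).trans (C 0 0 0 1)
  have h02 := (H 0 1 0 0).trans (C 0 1 0 0)
  have h11 := (H 0 0 1 1).trans (C 0 0 1 1)
  have h12 := (H 0 1 1 0).trans (C 0 1 1 0)
  have h22 := (H 1 1 0 0).trans (C 1 1 0 0)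
  norm_num at h00 h01 h02 h11 h12 h22
  exact rank_two_ne_id
    ((F1 (e 0)) 0 * (F3 (e 0)) 0) ((F1 (e 0)) 0 * (F3 (e 0)) 1) ((F1 (e 0)) 1 * (F3 (e 0)) 0)
    ((F2 (e 0)) 0 * (F4 (e 0)) 0) ((F2 (e 0)) 0 * (F4 (e 0)) 1) ((F2 (e 0)) 1 * (F4 (e 0)) 0)
    ((F1 (e 1)) 0 * (F3 (e 1)) 0) ((F1 (e 1)) 0 * (F3 (e 1)) 1) ((F1 (e 1)) 1 * (F3 (e 1)) 0)
    ((F2 (e 1)) 0 * (F4 (e 1)) 0) ((F2 (e 1)) 0 * (F4 (e 1)) 1) ((F2 (e 1)) 1 * (F4 (e 1)) 0)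
    (by linear_combination h00) (by linear_combination h01) (by linear_combination h02)
    (by linear_combination h11) (by linear_combination h12) (by linear_combination h22)
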